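/- Let X_n be a Markov chain on ℝ with jumps ξ(x). Suppose (i) there exist A > 0, ε > 0 with inf_x E[min(ξ(x), A)] = ε > 0, and (ii) δ := inf_x P{X_n > x for all n ≥ 1 | X₀ = x} > 0. Then the renewal measure H_y(x, x+h] := Σ_{n=0}^∞ P{X_n ∈ (x, x+h] | X₀ = y} satisfies H_y(x, x+h] ≤ (A+h)/(ε·δ) for all x, y ∈ ℝ and h > 0. -/

import Mathlib

open MeasureTheory ProbabilityTheory
open scoped ENNReal

/-- `kIterId K n` is the `n`-fold composition `Kⁿ` of the kernel `K`
(with `K⁰` the identity kernel). -/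
noncomputable def kIterId (K : Kernel ℝ ℝ) : ℕ → Kernel ℝ ℝ
  | 0 => Kernel.id
  | n + 1 => (kIterId K n) ∘ₖ K

lemma kIterId_zero_apply (K : Kernel ℝ ℝ) (y : ℝ) (s : Set ℝ) (hs : MeasurableSet s) :
    (kIterId K 0) y s = s.indicator 1 y := by
  simp [kIterId, Kernel.id_apply, Measure.dirac_apply' _ hs]

lemma kIterId_succ_apply (K : Kernel ℝ ℝ) (n : ℕ) (y : ℝ) {s : Set ℝ}
    (hs : MeasurableSet s) :
    (kIterId K (n + 1)) y s = ∫⁻ w, (kIterId K n) w s ∂(K y) := by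
  simp [kIterId, Kernel.comp_apply' _ _ _ hs]

lemma kIterId_univ_le (K : Kernel ℝ ℝ) (hK : ∀ z, K z Set.univ ≤ 1) (n : ℕ) (y : ℝ) :
    (kIterId K n) y Set.univ ≤ 1 := by
  induction n generalizing y with
  | zero => simp [kIterId_zero_apply _ _ _ MeasurableSet.univ]
  | succ n ih =>
      rw [kIterId_succ_apply _ _ _ MeasurableSet.univ]
      calc ∫⁻ w, (kIterId K n) w Set.univ ∂(K y) ≤ ∫⁻ _, 1 ∂(K y) :=
            lintegral_mono fun w => ih w
        _ = K y Set.univ := by simp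
        _ ≤ 1 := hK y

lemma kIterId_mono (K L : Kernel ℝ ℝ) (hKL : ∀ z, K z ≤ L z) (n : ℕ) (y : ℝ)
    {s : Set ℝ} (hs : MeasurableSet s) :
    (kIterId K n) y s ≤ (kIterId L n) y s := by
  induction n generalizing y with
  | zero => simp [kIterId]
  | succ n ih =>
      rw [kIterId_succ_apply _ _ _ hs, kIterId_succ_apply _ _ _ hs]
      exact lintegral_mono' (hKL y) fun w => ih w

/-- Local boundedness of the renewal measure.  Let `P` be the transition kernel of a
Markov chain on `ℝ` whose jumps `ξ(z)` satisfy `E[min(ξ(z), A)] ≥ ε > 0` for all `z`,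
and such that from every state `z` the chain stays strictly above `z` forever with
probability at least `δ > 0` (expressed through the powers of the kernel restricted
to `(z, ∞)`).  Then the renewal measure
`H_y(x, x+h] = Σ_{n≥0} P{X_n ∈ (x, x+h] | X₀ = y} = Σ_{n≥0} Pⁿ(y, (x,x+h])`
satisfies `H_y(x, x+h] ≤ (A+h)/(ε δ)` for all `x, y` and `h > 0`. -/
theorem stmt11 (P : Kernel ℝ ℝ) [IsMarkovKernel P]
    (A ε δ : ℝ) (hA : 0 < A) (hε : 0 < ε) (hδ : 0 < δ)
    (hdrift_int : ∀ z : ℝ, Integrable (fun y => min (y - z) A) (P z))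
    (hdrift : ∀ z : ℝ, ε ≤ ∫ y, min (y - z) A ∂(P z))
    (hstay : ∀ z : ℝ, ∀ m : ℕ,
      ENNReal.ofReal δ ≤
        (kIterId (P.restrict (measurableSet_Ioi : MeasurableSet (Set.Ioi z))) m) z
          Set.univ) :
    ∀ x y : ℝ, ∀ h : ℝ, 0 < h →
      ∑' n : ℕ, (kIterId P n) y (Set.Ioc x (x + h))
        ≤ ENNReal.ofReal ((A + h) / (ε * δ)) := by
  intro x y₀ h hh
  classical
  set I : Set ℝ := Set.Ioc x (x + h) with hIdef
  have hI : MeasurableSet I := measurableSet_Ioc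
  have hIic : MeasurableSet (Set.Iic (x + h)) := measurableSet_Iic
  have hIoi : MeasurableSet (Set.Ioi (x + h)) := measurableSet_Ioi
  set Q : Kernel ℝ ℝ := P.restrict hIic with hQdef
  set S : Kernel ℝ ℝ := P.restrict hIoi with hSdef
  set R : Kernel ℝ ℝ := Kernel.piecewise hIic P Kernel.id with hRdef
  set ε' := ENNReal.ofReal ε with hε'def
  set δ' := ENNReal.ofReal δ with hδ'def
  set Ah := ENNReal.ofReal (A + h) with hAhdef
  set Cv := Ah / ε' with hCvdef
  have hε'0 : ε' ≠ 0 := (ENNReal.ofReal_pos.2 hε).ne'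
  have hε'top : ε' ≠ ∞ := ENNReal.ofReal_ne_top
  have hδ'0 : δ' ≠ 0 := (ENNReal.ofReal_pos.2 hδ).ne'
  have hδ'top : δ' ≠ ∞ := ENNReal.ofReal_ne_top
  -- the occupation sums for `P` and for the kernel `Q` killed upon exceeding `x+h`
  set u : ℕ → ℝ → ℝ≥0∞ := fun N z => ∑ n ∈ Finset.range N, (kIterId P n) z I with hudef
  set v : ℕ → ℝ → ℝ≥0∞ := fun N z => ∑ n ∈ Finset.range N, (kIterId Q n) z I with hvdef
  have humeas : ∀ N, Measurable (u N) := fun N =>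
    Finset.measurable_sum _ fun n _ => Kernel.measurable_coe _ hI
  have hvmeas : ∀ N, Measurable (v N) := fun N =>
    Finset.measurable_sum _ fun n _ => Kernel.measurable_coe _ hI
  have hu_rec : ∀ N z, u (N + 1) z = I.indicator 1 z + ∫⁻ w, u N w ∂(P z) := by
    intro N z
    have h1 : u (N + 1) z
        = (∑ n ∈ Finset.range N, (kIterId P (n + 1)) z I) + (kIterId P 0) z I :=
      Finset.sum_range_succ' _ N
    rw [h1, kIterId_zero_apply _ _ _ hI, add_comm]
    congr 1
    calc ∑ n ∈ Finset.range N, (kIterId P (n + 1)) z I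
        = ∑ n ∈ Finset.range N, ∫⁻ w, (kIterId P n) w I ∂(P z) :=
          Finset.sum_congr rfl fun n _ => kIterId_succ_apply P n z hI
      _ = ∫⁻ w, ∑ n ∈ Finset.range N, (kIterId P n) w I ∂(P z) :=
          (lintegral_finset_sum _ fun n _ => Kernel.measurable_coe _ hI).symm
  have hv_rec : ∀ N z, v (N + 1) z
      = I.indicator 1 z + ∫⁻ w in Set.Iic (x + h), v N w ∂(P z) := by
    intro N z
    have h1 : v (N + 1) z
        = (∑ n ∈ Finset.range N, (kIterId Q (n + 1)) z I) + (kIterId Q 0) z I :=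
      Finset.sum_range_succ' _ N
    rw [h1, kIterId_zero_apply _ _ _ hI, add_comm]
    congr 1
    have hQz : Q z = (P z).restrict (Set.Iic (x + h)) := by
      rw [hQdef, Kernel.restrict_apply]
    calc ∑ n ∈ Finset.range N, (kIterId Q (n + 1)) z I
        = ∑ n ∈ Finset.range N, ∫⁻ w, (kIterId Q n) w I ∂(Q z) :=
          Finset.sum_congr rfl fun n _ => kIterId_succ_apply Q n z hI
      _ = ∫⁻ w, ∑ n ∈ Finset.range N, (kIterId Q n) w I ∂(Q z) :=
          (lintegral_finset_sum _ fun n _ => Kernel.measurable_coe _ hI).symm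
      _ = ∫⁻ w in Set.Iic (x + h), v N w ∂(P z) := by rw [hQz]
  -- the Lyapunov function
  set g : ℝ → ℝ := fun z => min (max (z - x) 0) (A + h) with hgdef
  have hgmeas : Measurable g :=
    ((measurable_id.sub_const x).max measurable_const).min measurable_const
  have hg0 : ∀ z, 0 ≤ g z := fun z => le_min (le_max_right _ _) (by linarith)
  have hgA : ∀ z, g z ≤ A + h := fun z => min_le_right _ _
  set G : ℝ → ℝ≥0∞ := fun z => ENNReal.ofReal (g z) with hGdef
  have hGmeas : Measurable G := ENNReal.measurable_ofReal.comp hgmeas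
  have hGA : ∀ z, G z ≤ Ah := fun z => ENNReal.ofReal_le_ofReal (hgA z)
  have hL1 : ∀ z, G z + ε' * I.indicator 1 z ≤ ∫⁻ w, G w ∂(R z) := by
    intro z
    by_cases hzI : z ∈ I
    · have hz1 : x < z := hzI.1
      have hz2 : z ≤ x + h := hzI.2
      have hRz : R z = P z := by
        rw [hRdef, Kernel.piecewise_apply, if_pos (Set.mem_Iic.2 hz2)]
      have hgz : g z = z - x := by
        rw [hgdef]
        simp only
        rw [max_eq_left (by linarith), min_eq_left (by linarith)]
      have hpt : ∀ w, g z + min (w - z) A ≤ g w := by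
        intro w
        rcases le_or_gt w x with hw | hw
        · have hgw : g w = 0 := by
            rw [hgdef]
            simp only
            rw [max_eq_right (by linarith), min_eq_left (by linarith)]
          have hmin : min (w - z) A ≤ w - z := min_le_left _ _
          rw [hgw, hgz]
          linarith
        · have hgw : g w = min (w - x) (A + h) := by
            rw [hgdef]
            simp only
            rw [max_eq_left (by linarith)]
          rw [hgw, hgz]
          rcases le_total (w - z) A with hc | hc
          · rw [min_eq_left hc]
            exact le_min (by linarith) (by linarith)
          · rw [min_eq_right hc]
            exact le_min (by linarith) (by linarith)
      have hg_int : Integrable g (P z) := by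
        refine (integrable_const (A + h)).mono' hgmeas.aestronglyMeasurable ?_
        refine Filter.Eventually.of_forall fun w => ?_
        rw [Real.norm_eq_abs, abs_of_nonneg (hg0 w)]
        exact hgA w
      have hmain : g z + ε ≤ ∫ w, g w ∂(P z) := by
        have h1 : ε ≤ ∫ w, min (w - z) A ∂(P z) := hdrift z
        have h2 : (∫ w, (g z + min (w - z) A) ∂(P z))
            = g z + ∫ w, min (w - z) A ∂(P z) := by
          rw [integral_add (integrable_const _) (hdrift_int z), integral_const]
          simp [measure_univ]
        have h3 : (∫ w, (g z + min (w - z) A) ∂(P z)) ≤ ∫ w, g w ∂(P z) :=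
          integral_mono ((integrable_const _).add (hdrift_int z)) hg_int hpt
        linarith
      have h4 : ∫⁻ w, G w ∂(P z) = ENNReal.ofReal (∫ w, g w ∂(P z)) :=
        (MeasureTheory.ofReal_integral_eq_lintegral_ofReal hg_int
          (Filter.Eventually.of_forall hg0)).symm
      rw [hRz, h4, Set.indicator_of_mem hzI, Pi.one_apply, mul_one]
      calc G z + ε' = ENNReal.ofReal (g z + ε) := (ENNReal.ofReal_add (hg0 z) hε.le).symm
        _ ≤ _ := ENNReal.ofReal_le_ofReal hmain
    · rw [Set.indicator_of_notMem hzI, mul_zero, add_zero]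
      by_cases hz : z ≤ x + h
      · have hRz : R z = P z := by
          rw [hRdef, Kernel.piecewise_apply, if_pos (Set.mem_Iic.2 hz)]
        have hzx : z ≤ x := by
          by_contra hc
          push_neg at hc
          exact hzI ⟨hc, hz⟩
        have hgz : g z = 0 := by
          rw [hgdef]
          simp only
          rw [max_eq_right (by linarith), min_eq_left (by linarith)]
        have hGz : G z = 0 := by rw [hGdef]; simp [hgz]
        rw [hGz]
        exact zero_le
      · have hRz : R z = Measure.dirac z := by
          rw [hRdef, Kernel.piecewise_apply, if_neg (fun hc => hz (Set.mem_Iic.1 hc)),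
            Kernel.id_apply]
        rw [hRz, lintegral_dirac' _ hGmeas]
  haveI : IsMarkovKernel R := by rw [hRdef]; infer_instance
  have hRuniv : ∀ n z, (kIterId R n) z Set.univ ≤ 1 :=
    kIterId_univ_le R fun z => le_of_eq measure_univ
  have hGint_le : ∀ n z, ∫⁻ w, G w ∂((kIterId R n) z) ≤ Ah := by
    intro n z
    calc ∫⁻ w, G w ∂((kIterId R n) z) ≤ ∫⁻ _, Ah ∂((kIterId R n) z) :=
          lintegral_mono fun w => hGA w
      _ = Ah * (kIterId R n) z Set.univ := lintegral_const _
      _ ≤ Ah * 1 := mul_le_mul_right (hRuniv n z) _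
      _ = Ah := mul_one _
  have hL2 : ∀ n z, G z + ε' * (∑ m ∈ Finset.range n, (kIterId R m) z I)
      ≤ ∫⁻ w, G w ∂((kIterId R n) z) := by
    intro n
    induction n with
    | zero =>
        intro z
        simp only [Finset.range_zero, Finset.sum_empty, mul_zero, add_zero]
        have hR0 : (kIterId R 0) z = Measure.dirac z := by
          show Kernel.id z = _
          rw [Kernel.id_apply]
        rw [hR0, lintegral_dirac' _ hGmeas]
    | succ n ih =>
        intro z
        have hcomp : ∫⁻ w, G w ∂((kIterId R (n + 1)) z)
            = ∫⁻ w, (∫⁻ c, G c ∂((kIterId R n) w)) ∂(R z) := by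
          show ∫⁻ w, G w ∂((kIterId R n ∘ₖ R) z) = _
          exact Kernel.lintegral_comp _ _ _ hGmeas
        rw [hcomp]
        have step1 : ∫⁻ w, (G w + ε' * (∑ m ∈ Finset.range n, (kIterId R m) w I)) ∂(R z)
            ≤ ∫⁻ w, (∫⁻ c, G c ∂((kIterId R n) w)) ∂(R z) := lintegral_mono fun w => ih w
        refine le_trans ?_ step1
        have hsum_meas : Measurable fun w => ∑ m ∈ Finset.range n, (kIterId R m) w I :=
          Finset.measurable_sum _ fun m _ => Kernel.measurable_coe _ hI
        rw [lintegral_add_left hGmeas, lintegral_const_mul _ hsum_meas,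
          lintegral_finset_sum _ fun m _ => Kernel.measurable_coe _ hI]
        have hsucc : ∀ m, (∫⁻ w, (kIterId R m) w I ∂(R z)) = (kIterId R (m + 1)) z I :=
          fun m => (kIterId_succ_apply R m z hI).symm
        rw [Finset.sum_congr rfl fun m _ => hsucc m]
        have hs : (∑ m ∈ Finset.range (n + 1), (kIterId R m) z I)
            = (∑ m ∈ Finset.range n, (kIterId R (m + 1)) z I) + (kIterId R 0) z I :=
          Finset.sum_range_succ' _ n
        rw [hs, kIterId_zero_apply _ _ _ hI]
        calc G z + ε' * ((∑ m ∈ Finset.range n, (kIterId R (m + 1)) z I) + I.indicator 1 z)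
            = (G z + ε' * I.indicator 1 z)
              + ε' * (∑ m ∈ Finset.range n, (kIterId R (m + 1)) z I) := by ring
          _ ≤ (∫⁻ w, G w ∂(R z))
              + ε' * (∑ m ∈ Finset.range n, (kIterId R (m + 1)) z I) :=
            add_le_add_left (hL1 z) _
  -- comparison of the killed kernel with the frozen kernel
  have hQR : ∀ m, ∀ z ∈ Set.Iic (x + h), (kIterId Q m) z I ≤ (kIterId R m) z I := by
    intro m
    induction m with
    | zero => intro z _; simp [kIterId]
    | succ m ih =>
        intro z hz
        rw [kIterId_succ_apply _ _ _ hI, kIterId_succ_apply _ _ _ hI]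
        have hQz : Q z = (P z).restrict (Set.Iic (x + h)) := by
          rw [hQdef, Kernel.restrict_apply]
        have hRz : R z = P z := by rw [hRdef, Kernel.piecewise_apply, if_pos hz]
        rw [hQz, hRz]
        calc ∫⁻ w in Set.Iic (x + h), (kIterId Q m) w I ∂(P z)
            ≤ ∫⁻ w in Set.Iic (x + h), (kIterId R m) w I ∂(P z) :=
              setLIntegral_mono (Kernel.measurable_coe _ hI) fun w hw => ih w hw
          _ ≤ ∫⁻ w, (kIterId R m) w I ∂(P z) := setLIntegral_le_lintegral _ _
  -- the occupation bound for the killed chain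
  have hvIic : ∀ N, ∀ z ∈ Set.Iic (x + h), v N z ≤ Cv := by
    intro N z hz
    have h1 : v N z ≤ ∑ m ∈ Finset.range N, (kIterId R m) z I :=
      Finset.sum_le_sum fun m _ => hQR m z hz
    have h2 : ε' * (∑ m ∈ Finset.range N, (kIterId R m) z I) ≤ Ah :=
      le_trans le_add_self (le_trans (hL2 N z) (hGint_le N z))
    have h3 : v N z * ε' ≤ Ah := by
      rw [mul_comm]
      exact le_trans (mul_le_mul_right h1 ε') h2
    exact (ENNReal.le_div_iff_mul_le (Or.inl hε'0) (Or.inl hε'top)).2 h3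
  have hv_le : ∀ N z, v N z ≤ Cv := by
    intro N z
    by_cases hz : z ∈ Set.Iic (x + h)
    · exact hvIic N z hz
    · cases N with
      | zero => simp [hvdef]
      | succ N =>
          rw [hv_rec N z]
          have hzI : z ∉ I := fun hc => hz (Set.mem_Iic.2 hc.2)
          rw [Set.indicator_of_notMem hzI, zero_add]
          calc ∫⁻ w in Set.Iic (x + h), v N w ∂(P z)
              ≤ ∫⁻ _ in Set.Iic (x + h), Cv ∂(P z) :=
                setLIntegral_mono measurable_const fun w hw => hvIic N w hw
            _ = Cv * (P z) (Set.Iic (x + h)) := setLIntegral_const _ _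
            _ ≤ Cv * 1 := mul_le_mul_right prob_le_one _
            _ = Cv := mul_one _
  -- the supremum of the occupation sums
  set M : ℕ → ℝ≥0∞ := fun N => ⨆ z, u N z with hMdef
  have hu_le_M : ∀ N z, u N z ≤ M N := fun N z => le_iSup (u N) z
  have hPuniv : ∀ z : ℝ, P z Set.univ ≤ 1 := fun z => le_of_eq measure_univ
  have hM_le : ∀ N : ℕ, M N ≤ (N : ℝ≥0∞) := by
    intro N
    refine iSup_le fun z => ?_
    calc u N z ≤ ∑ _n ∈ Finset.range N, 1 :=
          Finset.sum_le_sum fun n _ =>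
            le_trans (measure_mono (Set.subset_univ _)) (kIterId_univ_le P hPuniv n z)
      _ = (N : ℝ≥0∞) := by simp
  have hM_fin : ∀ N : ℕ, M N ≠ ∞ := fun N =>
    ne_top_of_le_ne_top (ENNReal.natCast_ne_top N) (hM_le N)
  have hu_mono : ∀ N z, u N z ≤ u (N + 1) z := fun N z =>
    Finset.sum_le_sum_of_subset (Finset.range_subset_range.2 (Nat.le_succ N))
  have hM_mono : ∀ N, M N ≤ M (N + 1) := fun N =>
    iSup_mono fun z => hu_mono N z
  -- probability of staying above `x+h`
  have hSsub : ∀ z, S z Set.univ ≤ 1 := by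
    intro z
    rw [hSdef, Kernel.restrict_apply' _ _ _ MeasurableSet.univ, Set.univ_inter]
    exact prob_le_one
  have hSuniv_le : ∀ n z, (kIterId S n) z Set.univ ≤ 1 := kIterId_univ_le S hSsub
  have hSstay : ∀ n, ∀ z ∈ Set.Ioi (x + h), δ' ≤ (kIterId S n) z Set.univ := by
    intro n z hz
    refine le_trans (hstay z n) ?_
    refine kIterId_mono _ _ ?_ n z MeasurableSet.univ
    intro w
    show (P.restrict _) w ≤ S w
    rw [hSdef, Kernel.restrict_apply, Kernel.restrict_apply]
    exact Measure.restrict_mono (Set.Ioi_subset_Ioi (le_of_lt hz)) le_rfl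
  have hSrec : ∀ n z, (kIterId S (n + 1)) z Set.univ
      = ∫⁻ w in Set.Ioi (x + h), (kIterId S n) w Set.univ ∂(P z) := by
    intro n z
    rw [kIterId_succ_apply _ _ _ MeasurableSet.univ, hSdef, Kernel.restrict_apply]
  -- few visits to `I` from above `x+h`
  have hP2 : ∀ N, ∀ z ∈ Set.Ioi (x + h),
      u (N + 1) z ≤ M N * (1 - (kIterId S (N + 1)) z Set.univ) := by
    intro N
    induction N with
    | zero =>
        intro z hz
        have hu1 : u 1 z = I.indicator 1 z := by
          rw [hudef]
          simp only [Finset.sum_range_one]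
          exact kIterId_zero_apply _ _ _ hI
        rw [hu1, Set.indicator_of_notMem (fun hc => absurd hc.2 (not_le.2 hz))]
        exact zero_le
    | succ N ih =>
        intro z hz
        have hzI : z ∉ I := fun hc => absurd hc.2 (not_le.2 hz)
        rw [hu_rec (N + 1) z, Set.indicator_of_notMem hzI, zero_add,
          ← lintegral_add_compl (fun w => u (N + 1) w) hIic, Set.compl_Iic]
        have hbound1 : ∫⁻ w in Set.Iic (x + h), u (N + 1) w ∂(P z)
            ≤ M (N + 1) * (P z) (Set.Iic (x + h)) := by
          calc ∫⁻ w in Set.Iic (x + h), u (N + 1) w ∂(P z)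
              ≤ ∫⁻ _ in Set.Iic (x + h), M (N + 1) ∂(P z) :=
                setLIntegral_mono measurable_const fun w _ => hu_le_M (N + 1) w
            _ = M (N + 1) * (P z) (Set.Iic (x + h)) := setLIntegral_const _ _
        have hfmeas : Measurable fun w => (kIterId S (N + 1)) w Set.univ :=
          Kernel.measurable_coe _ MeasurableSet.univ
        have hbound2 : ∫⁻ w in Set.Ioi (x + h), u (N + 1) w ∂(P z)
            ≤ M (N + 1) * ((P z) (Set.Ioi (x + h))
                - ∫⁻ w in Set.Ioi (x + h), (kIterId S (N + 1)) w Set.univ ∂(P z)) := by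
          calc ∫⁻ w in Set.Ioi (x + h), u (N + 1) w ∂(P z)
              ≤ ∫⁻ w in Set.Ioi (x + h),
                  M N * (1 - (kIterId S (N + 1)) w Set.univ) ∂(P z) :=
                setLIntegral_mono (measurable_const.mul (measurable_const.sub hfmeas))
                  fun w hw => ih w hw
            _ = M N * ∫⁻ w in Set.Ioi (x + h),
                  (1 - (kIterId S (N + 1)) w Set.univ) ∂(P z) :=
                lintegral_const_mul _ (measurable_const.sub hfmeas)
            _ = M N * ((P z) (Set.Ioi (x + h))
                - ∫⁻ w in Set.Ioi (x + h), (kIterId S (N + 1)) w Set.univ ∂(P z)) := by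
                congr 1
                have hfin : (∫⁻ w in Set.Ioi (x + h),
                    (kIterId S (N + 1)) w Set.univ ∂(P z)) ≠ ∞ := by
                  refine ne_top_of_le_ne_top (measure_ne_top (P z) (Set.Ioi (x + h))) ?_
                  calc ∫⁻ w in Set.Ioi (x + h), (kIterId S (N + 1)) w Set.univ ∂(P z)
                      ≤ ∫⁻ _ in Set.Ioi (x + h), 1 ∂(P z) :=
                        setLIntegral_mono measurable_const fun w _ => hSuniv_le (N + 1) w
                    _ = 1 * (P z) (Set.Ioi (x + h)) := setLIntegral_const _ _
                    _ = (P z) (Set.Ioi (x + h)) := one_mul _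
                rw [lintegral_sub hfmeas hfin
                  (Filter.Eventually.of_forall fun w => hSuniv_le (N + 1) w)]
                congr 1
                rw [setLIntegral_const, one_mul]
            _ ≤ M (N + 1) * ((P z) (Set.Ioi (x + h))
                - ∫⁻ w in Set.Ioi (x + h), (kIterId S (N + 1)) w Set.univ ∂(P z)) :=
                mul_le_mul_left (hM_mono N) _
        calc (∫⁻ w in Set.Iic (x + h), u (N + 1) w ∂(P z))
              + ∫⁻ w in Set.Ioi (x + h), u (N + 1) w ∂(P z)
            ≤ M (N + 1) * (P z) (Set.Iic (x + h))
              + M (N + 1) * ((P z) (Set.Ioi (x + h))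
                - ∫⁻ w in Set.Ioi (x + h), (kIterId S (N + 1)) w Set.univ ∂(P z)) :=
              add_le_add hbound1 hbound2
          _ = M (N + 1) * ((P z) (Set.Iic (x + h))
              + ((P z) (Set.Ioi (x + h))
                - ∫⁻ w in Set.Ioi (x + h), (kIterId S (N + 1)) w Set.univ ∂(P z))) :=
              (mul_add _ _ _).symm
          _ = M (N + 1) * (1 - (kIterId S (N + 2)) z Set.univ) := by
              congr 1
              have hle : (∫⁻ w in Set.Ioi (x + h), (kIterId S (N + 1)) w Set.univ ∂(P z))
                  ≤ (P z) (Set.Ioi (x + h)) := by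
                calc ∫⁻ w in Set.Ioi (x + h), (kIterId S (N + 1)) w Set.univ ∂(P z)
                    ≤ ∫⁻ _ in Set.Ioi (x + h), 1 ∂(P z) :=
                      setLIntegral_mono measurable_const fun w _ => hSuniv_le (N + 1) w
                  _ = 1 * (P z) (Set.Ioi (x + h)) := setLIntegral_const _ _
                  _ = (P z) (Set.Ioi (x + h)) := one_mul _
              have hcanc : AddLECancellable
                  (∫⁻ w in Set.Ioi (x + h), (kIterId S (N + 1)) w Set.univ ∂(P z)) :=
                ENNReal.cancel_of_ne
                  (ne_top_of_le_ne_top (measure_ne_top (P z) (Set.Ioi (x + h))) hle)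
              rw [← hcanc.add_tsub_assoc_of_le hle, hSrec (N + 1) z]
              congr 1
              rw [← Set.compl_Iic]
              rw [measure_add_measure_compl hIic]
              exact measure_univ
  -- from above `x+h`, few visits via the stay-above probability
  have hUJ : ∀ N, ∀ z ∈ Set.Ioi (x + h), u N z ≤ M N * (1 - δ') := by
    intro N
    cases N with
    | zero =>
        intro z _
        have : u 0 z = 0 := by simp [hudef]
        rw [this]
        exact zero_le
    | succ N =>
        intro z hz
        calc u (N + 1) z ≤ M N * (1 - (kIterId S (N + 1)) z Set.univ) := hP2 N z hz
          _ ≤ M N * (1 - δ') := mul_le_mul_right (tsub_le_tsub_left (hSstay (N + 1) z hz) 1) _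
          _ ≤ M (N + 1) * (1 - δ') := mul_le_mul_left (hM_mono N) _
  -- first-passage decomposition
  have hP1 : ∀ N z, u (N + 1) z ≤ v (N + 1) z + M N * (1 - δ') := by
    intro N
    induction N with
    | zero =>
        intro z
        have hu1 : u 1 z = I.indicator 1 z := by
          rw [hudef]
          simp only [Finset.sum_range_one]
          exact kIterId_zero_apply _ _ _ hI
        have hv1 : v 1 z = I.indicator 1 z := by
          rw [hvdef]
          simp only [Finset.sum_range_one]
          exact kIterId_zero_apply _ _ _ hI
        rw [hu1, hv1]
        exact le_add_right le_rfl
    | succ N ih =>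
        intro z
        rw [hu_rec (N + 1) z, hv_rec (N + 1) z,
          ← lintegral_add_compl (fun w => u (N + 1) w) hIic, Set.compl_Iic]
        have hb1 : ∫⁻ w in Set.Iic (x + h), u (N + 1) w ∂(P z)
            ≤ (∫⁻ w in Set.Iic (x + h), v (N + 1) w ∂(P z))
              + M N * (1 - δ') * (P z) (Set.Iic (x + h)) := by
          calc ∫⁻ w in Set.Iic (x + h), u (N + 1) w ∂(P z)
              ≤ ∫⁻ w in Set.Iic (x + h), (v (N + 1) w + M N * (1 - δ')) ∂(P z) :=
                setLIntegral_mono ((hvmeas (N + 1)).add measurable_const)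
                  fun w _ => ih w
            _ = (∫⁻ w in Set.Iic (x + h), v (N + 1) w ∂(P z))
                + M N * (1 - δ') * (P z) (Set.Iic (x + h)) := by
                rw [lintegral_add_right _ measurable_const, setLIntegral_const]
        have hb2 : ∫⁻ w in Set.Ioi (x + h), u (N + 1) w ∂(P z)
            ≤ M (N + 1) * (1 - δ') * (P z) (Set.Ioi (x + h)) := by
          calc ∫⁻ w in Set.Ioi (x + h), u (N + 1) w ∂(P z)
              ≤ ∫⁻ _ in Set.Ioi (x + h), M (N + 1) * (1 - δ') ∂(P z) :=
                setLIntegral_mono measurable_const fun w hw => hUJ (N + 1) w hw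
            _ = M (N + 1) * (1 - δ') * (P z) (Set.Ioi (x + h)) := setLIntegral_const _ _
        calc I.indicator 1 z + ((∫⁻ w in Set.Iic (x + h), u (N + 1) w ∂(P z))
              + ∫⁻ w in Set.Ioi (x + h), u (N + 1) w ∂(P z))
            ≤ I.indicator 1 z + (((∫⁻ w in Set.Iic (x + h), v (N + 1) w ∂(P z))
              + M N * (1 - δ') * (P z) (Set.Iic (x + h)))
              + M (N + 1) * (1 - δ') * (P z) (Set.Ioi (x + h))) :=
              add_le_add_right (add_le_add hb1 hb2) _
          _ ≤ I.indicator 1 z + (((∫⁻ w in Set.Iic (x + h), v (N + 1) w ∂(P z))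
              + M (N + 1) * (1 - δ') * (P z) (Set.Iic (x + h)))
              + M (N + 1) * (1 - δ') * (P z) (Set.Ioi (x + h))) := by
              gcongr
              exact hM_mono N
          _ = (I.indicator 1 z + ∫⁻ w in Set.Iic (x + h), v (N + 1) w ∂(P z))
              + M (N + 1) * (1 - δ')
                * ((P z) (Set.Iic (x + h)) + (P z) (Set.Ioi (x + h))) := by ring
          _ = (I.indicator 1 z + ∫⁻ w in Set.Iic (x + h), v (N + 1) w ∂(P z))
              + M (N + 1) * (1 - δ') := by
              rw [show (P z) (Set.Iic (x + h)) + (P z) (Set.Ioi (x + h)) = 1 by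
                rw [← Set.compl_Iic, measure_add_measure_compl hIic]; exact measure_univ,
                mul_one]
  -- the fixed point inequality for `M`
  have hMrec : ∀ N, M N ≤ Cv + M N * (1 - δ') := by
    intro N
    cases N with
    | zero =>
        refine iSup_le fun z => ?_
        have : u 0 z = 0 := by simp [hudef]
        rw [this]
        exact zero_le
    | succ N =>
        refine iSup_le fun z => ?_
        calc u (N + 1) z ≤ v (N + 1) z + M N * (1 - δ') := hP1 N z
          _ ≤ Cv + M (N + 1) * (1 - δ') :=
            add_le_add (hv_le (N + 1) z) (mul_le_mul_left (hM_mono N) _)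
  have hδ'1 : δ' ≤ 1 := by
    refine le_trans (hstay 0 0) ?_
    refine le_trans (kIterId_univ_le _ ?_ 0 0) le_rfl
    intro z
    rw [Kernel.restrict_apply' _ _ _ MeasurableSet.univ, Set.univ_inter]
    exact prob_le_one
  -- solving the fixed point inequality
  have hMfinal : ∀ N, M N ≤ Cv / δ' := by
    intro N
    have hkey : δ' * M N + (1 - δ') * M N = M N := by
      rw [← add_mul, add_tsub_cancel_of_le hδ'1, one_mul]
    have h1 : δ' * M N + (1 - δ') * M N ≤ Cv + (1 - δ') * M N := by
      rw [hkey, mul_comm (1 - δ') (M N)]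
      exact le_trans (hMrec N) le_rfl
    have hfin : (1 - δ') * M N ≠ ∞ :=
      ENNReal.mul_ne_top (ne_top_of_le_ne_top ENNReal.one_ne_top tsub_le_self) (hM_fin N)
    have h2 : δ' * M N ≤ Cv := (ENNReal.add_le_add_iff_right hfin).1 h1
    rw [ENNReal.le_div_iff_mul_le (Or.inl hδ'0) (Or.inl hδ'top), mul_comm]
    exact h2
  -- conclusion
  have hfinal : ∑' n : ℕ, (kIterId P n) y₀ I ≤ Cv / δ' := by
    refine ENNReal.tsum_le_of_sum_range_le fun N => ?_
    exact le_trans (hu_le_M N y₀) (hMfinal N)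
  refine le_trans hfinal (le_of_eq ?_)
  rw [hCvdef, hAhdef, hε'def, hδ'def]
  rw [ENNReal.ofReal_div_of_pos (mul_pos hε hδ), ENNReal.ofReal_mul hε.le]
  rw [div_eq_mul_inv, div_eq_mul_inv, div_eq_mul_inv, mul_assoc]
  congr 1
  exact (ENNReal.mul_inv (Or.inl (ENNReal.ofReal_pos.2 hε).ne') 
    (Or.inl ENNReal.ofReal_ne_top)).symm
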